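/- Fix t₁, …, t_d ∈ [−1,1] and set x_i = ξ_β(t_i) where ξ_β(t) = sign(t)(1 − exp(−|t|β)). Fix z ∈ (0,1) and m₁ = (−log z)/β. Then F^st_β(x₁,…,x_d)^{m₁} → z^{φ^st(t₁,…,t_d)} as β → ∞, where φ^st(t₁,…,t_d) = min(Σ_{i: t_i<0}|t_i|, Σ_{i: t_i>0}|t_i|). -/

import Mathlib

open Filter Real

/-- `ξ_β(t) = sign(t)·(1 − exp(−|t|β))`. -/
noncomputable def xiMap (β t : ℝ) : ℝ := Real.sign t * (1 - Real.exp (-|t| * β))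

/-- `f_β^-(x) = (1+x)/2 + (1−x)/2·e^{−β}`. -/
noncomputable def fMinus (β x : ℝ) : ℝ := (1 + x) / 2 + (1 - x) / 2 * Real.exp (-β)

/-- `f_β^+(x) = (1−x)/2 + (1+x)/2·e^{−β}`. -/
noncomputable def fPlus (β x : ℝ) : ℝ := (1 - x) / 2 + (1 + x) / 2 * Real.exp (-β)

/-- `F^st_β(x₁,…,x_d) = ∏ f_β^-(x_i) + ∏ f_β^+(x_i)`. -/
noncomputable def Fst (β : ℝ) {d : ℕ} (x : Fin d → ℝ) : ℝ :=
  (∏ i, fMinus β (x i)) + ∏ i, fPlus β (x i)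

/-- rate for `fMinus` -/
noncomputable def cNeg (t : ℝ) : ℝ := if t < 0 then |t| else 0

lemma cNeg_nonneg (t : ℝ) : 0 ≤ cNeg t := by
  unfold cNeg; split <;> positivity

lemma fMinus_bounds {β t : ℝ} (hβ : 0 ≤ β) (ht : |t| ≤ 1) :
    Real.exp (-(cNeg t) * β) / 2 ≤ fMinus β (xiMap β t) ∧
      fMinus β (xiMap β t) ≤ 3 / 2 * Real.exp (-(cNeg t) * β) := by
  have hb1 : Real.exp (-β) ≤ 1 := Real.exp_le_one_iff.mpr (by linarith)
  rcases lt_trichotomy t 0 with h | h | h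
  · have h1 : -1 ≤ t := by rw [abs_of_neg h] at ht; linarith
    have habs : |t| = -t := abs_of_neg h
    have hsign : Real.sign t = -1 := Real.sign_of_neg h
    have hE1 : Real.exp (t * β) ≤ 1 := Real.exp_le_one_iff.mpr (by nlinarith)
    have hE2 : Real.exp (-β) ≤ Real.exp (t * β) := Real.exp_le_exp.mpr (by nlinarith)
    have hE3 : (0:ℝ) < Real.exp (t * β) := Real.exp_pos _
    simp only [xiMap, fMinus, cNeg, if_pos h, habs, hsign]
    rw [show -(-t) * β = t * β by ring]
    constructor <;> nlinarith [Real.exp_pos (-β)]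
  · subst h
    simp only [xiMap, fMinus, cNeg, lt_irrefl, if_neg (lt_irrefl (0:ℝ)), Real.sign_zero]
    norm_num
    exact ⟨(Real.exp_pos _).le, by linarith⟩
  · have habs : |t| = t := abs_of_pos h
    have hsign : Real.sign t = 1 := Real.sign_of_pos h
    have hE1 : Real.exp (-(t * β)) ≤ 1 := Real.exp_le_one_iff.mpr (by nlinarith)
    have hE3 : (0:ℝ) < Real.exp (-(t * β)) := Real.exp_pos _
    simp only [xiMap, fMinus, cNeg, if_neg (asymm h), habs, hsign, neg_zero, zero_mul,
      Real.exp_zero, one_mul]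
    rw [show (-t * β : ℝ) = -(t * β) by ring]
    refine ⟨by nlinarith [Real.exp_pos (-β)], by nlinarith [Real.exp_pos (-β)]⟩

lemma xiMap_neg (β t : ℝ) : xiMap β (-t) = -xiMap β t := by
  simp [xiMap, Real.sign_neg]

lemma fPlus_eq (β x : ℝ) : fPlus β x = fMinus β (-x) := by
  unfold fPlus fMinus; ring

noncomputable def cPos (t : ℝ) : ℝ := if 0 < t then |t| else 0

lemma cPos_eq (t : ℝ) : cPos t = cNeg (-t) := by
  simp [cPos, cNeg, neg_lt_zero]

lemma fPlus_bounds {β t : ℝ} (hβ : 0 ≤ β) (ht : |t| ≤ 1) :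
    Real.exp (-(cPos t) * β) / 2 ≤ fPlus β (xiMap β t) ∧
      fPlus β (xiMap β t) ≤ 3 / 2 * Real.exp (-(cPos t) * β) := by
  rw [fPlus_eq, ← xiMap_neg, cPos_eq]
  exact fMinus_bounds hβ (by rwa [abs_neg])

/-- With `x_i = ξ_β(t_i)` and `m₁ = (−log z)/β`,
`F^st_β(x₁,…,x_d)^{m₁} → z^{φ^st(t₁,…,t_d)}` as `β → ∞`, where
`φ^st = min(Σ_{t_i<0}|t_i|, Σ_{t_i>0}|t_i|)`. -/
theorem tendsto_Fst_rpow (d : ℕ) (t : Fin d → ℝ)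
    (ht : ∀ i, t i ∈ Set.Icc (-1 : ℝ) 1) (z : ℝ) (hz : z ∈ Set.Ioo (0 : ℝ) 1) :
    Tendsto
      (fun β : ℝ => (Fst β (fun i => xiMap β (t i))) ^ (-Real.log z / β))
      atTop
      (nhds (z ^ min (∑ i ∈ Finset.univ.filter (fun i => t i < 0), |t i|)
                     (∑ i ∈ Finset.univ.filter (fun i => 0 < t i), |t i|))) := by
  have htabs : ∀ i, |t i| ≤ 1 := fun i => abs_le.mpr ⟨(ht i).1, (ht i).2⟩
  set Am : ℝ := ∑ i, cNeg (t i) with hAm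
  set Ap : ℝ := ∑ i, cPos (t i) with hAp
  have hAmEq : (∑ i ∈ Finset.univ.filter (fun i => t i < 0), |t i|) = Am := by
    rw [hAm]; rw [Finset.sum_filter]; rfl
  have hApEq : (∑ i ∈ Finset.univ.filter (fun i => 0 < t i), |t i|) = Ap := by
    rw [hAp]; rw [Finset.sum_filter]; rfl
  rw [hAmEq, hApEq]
  set M : ℝ := min Am Ap with hM
  set c₁ : ℝ := (1/2 : ℝ) ^ d with hc₁
  set c₂ : ℝ := 2 * (3/2 : ℝ) ^ d with hc₂
  have hc₁pos : 0 < c₁ := by positivity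
  have hc₂pos : 0 < c₂ := by positivity
  -- product lemmas
  have prodExp : ∀ (β : ℝ) (c : Fin d → ℝ),
      ∏ i, Real.exp (-(c i) * β) = Real.exp (-(∑ i, c i) * β) := by
    intro β c
    rw [← Real.exp_sum]
    congr 1
    simp only [neg_mul, Finset.sum_neg_distrib, Finset.sum_mul]
  -- bounds on Fst
  have hF_lower : ∀ β : ℝ, 0 ≤ β →
      c₁ * Real.exp (-M * β) ≤ Fst β (fun i => xiMap β (t i)) := by
    intro β hβ
    have hPm : c₁ * Real.exp (-Am * β) ≤ ∏ i, fMinus β (xiMap β (t i)) := by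
      calc c₁ * Real.exp (-Am * β) = ∏ i, (Real.exp (-(cNeg (t i)) * β) / 2) := by
            rw [Finset.prod_div_distrib, prodExp β (fun i => cNeg (t i)), Finset.prod_const,
              hc₁, hAm]
            simp [Finset.card_univ]
            ring
        _ ≤ ∏ i, fMinus β (xiMap β (t i)) :=
            Finset.prod_le_prod (fun i _ => by positivity)
              (fun i _ => (fMinus_bounds hβ (htabs i)).1)
    have hPp : c₁ * Real.exp (-Ap * β) ≤ ∏ i, fPlus β (xiMap β (t i)) := by
      calc c₁ * Real.exp (-Ap * β) = ∏ i, (Real.exp (-(cPos (t i)) * β) / 2) := by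
            rw [Finset.prod_div_distrib, prodExp β (fun i => cPos (t i)), Finset.prod_const,
              hc₁, hAp]
            simp [Finset.card_univ]
            ring
        _ ≤ ∏ i, fPlus β (xiMap β (t i)) :=
            Finset.prod_le_prod (fun i _ => by positivity)
              (fun i _ => (fPlus_bounds hβ (htabs i)).1)
    have hPmpos : (0:ℝ) ≤ ∏ i, fMinus β (xiMap β (t i)) := le_trans (by positivity) hPm
    have hPppos : (0:ℝ) ≤ ∏ i, fPlus β (xiMap β (t i)) := le_trans (by positivity) hPp
    unfold Fst
    rcases min_cases Am Ap with ⟨hmin, _⟩ | ⟨hmin, _⟩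
    · rw [hM, hmin]; linarith
    · rw [hM, hmin]; linarith
  have hF_upper : ∀ β : ℝ, 0 ≤ β →
      Fst β (fun i => xiMap β (t i)) ≤ c₂ * Real.exp (-M * β) := by
    intro β hβ
    have hPm : ∏ i, fMinus β (xiMap β (t i)) ≤ (3/2:ℝ)^d * Real.exp (-Am * β) := by
      calc ∏ i, fMinus β (xiMap β (t i))
          ≤ ∏ i, (3/2 * Real.exp (-(cNeg (t i)) * β)) :=
            Finset.prod_le_prod
              (fun i _ => le_trans (by positivity) (fMinus_bounds hβ (htabs i)).1)
              (fun i _ => (fMinus_bounds hβ (htabs i)).2)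
        _ = (3/2:ℝ)^d * Real.exp (-Am * β) := by
            rw [Finset.prod_mul_distrib, prodExp β (fun i => cNeg (t i)), Finset.prod_const,
              hAm]
            simp [Finset.card_univ]
    have hPp : ∏ i, fPlus β (xiMap β (t i)) ≤ (3/2:ℝ)^d * Real.exp (-Ap * β) := by
      calc ∏ i, fPlus β (xiMap β (t i))
          ≤ ∏ i, (3/2 * Real.exp (-(cPos (t i)) * β)) :=
            Finset.prod_le_prod
              (fun i _ => le_trans (by positivity) (fPlus_bounds hβ (htabs i)).1)
              (fun i _ => (fPlus_bounds hβ (htabs i)).2)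
        _ = (3/2:ℝ)^d * Real.exp (-Ap * β) := by
            rw [Finset.prod_mul_distrib, prodExp β (fun i => cPos (t i)), Finset.prod_const,
              hAp]
            simp [Finset.card_univ]
    have hEm : Real.exp (-Am * β) ≤ Real.exp (-M * β) := by
      apply Real.exp_le_exp.mpr
      have : M ≤ Am := min_le_left _ _
      nlinarith
    have hEp : Real.exp (-Ap * β) ≤ Real.exp (-M * β) := by
      apply Real.exp_le_exp.mpr
      have : M ≤ Ap := min_le_right _ _
      nlinarith
    unfold Fst
    have h32 : (0:ℝ) ≤ (3/2:ℝ)^d := by positivity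
    rw [hc₂]
    nlinarith
  have hFpos : ∀ β : ℝ, 0 ≤ β → 0 < Fst β (fun i => xiMap β (t i)) := fun β hβ =>
    lt_of_lt_of_le (by positivity) (hF_lower β hβ)
  -- log limit
  have key : Tendsto (fun β : ℝ => Real.log (Fst β (fun i => xiMap β (t i))) / β)
      atTop (nhds (-M)) := by
    have hlow : Tendsto (fun β : ℝ => Real.log c₁ / β + -M) atTop (nhds (-M)) := by
      have := (tendsto_const_nhds (α := ℝ) (x := Real.log c₁)).div_atTop tendsto_id
      simpa using this.add_const (-M)
    have hhigh : Tendsto (fun β : ℝ => Real.log c₂ / β + -M) atTop (nhds (-M)) := by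
      have := (tendsto_const_nhds (α := ℝ) (x := Real.log c₂)).div_atTop tendsto_id
      simpa using this.add_const (-M)
    apply tendsto_of_tendsto_of_tendsto_of_le_of_le' hlow hhigh
    · filter_upwards [eventually_ge_atTop (1:ℝ)] with β hβ
      have hβ0 : (0:ℝ) < β := by linarith
      have h1 : Real.log (c₁ * Real.exp (-M * β)) ≤
          Real.log (Fst β (fun i => xiMap β (t i))) :=
        Real.log_le_log (by positivity) (hF_lower β hβ0.le)
      rw [Real.log_mul (ne_of_gt hc₁pos) (ne_of_gt (Real.exp_pos _)), Real.log_exp] at h1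
      calc Real.log c₁ / β + -M = (Real.log c₁ + -M * β) / β := by
            field_simp
        _ ≤ Real.log (Fst β (fun i => xiMap β (t i))) / β :=
            div_le_div_of_nonneg_right h1 hβ0.le
    · filter_upwards [eventually_ge_atTop (1:ℝ)] with β hβ
      have hβ0 : (0:ℝ) < β := by linarith
      have h1 : Real.log (Fst β (fun i => xiMap β (t i))) ≤
          Real.log (c₂ * Real.exp (-M * β)) :=
        Real.log_le_log (hFpos β hβ0.le) (hF_upper β hβ0.le)
      rw [Real.log_mul (ne_of_gt hc₂pos) (ne_of_gt (Real.exp_pos _)), Real.log_exp] at h1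
      calc Real.log (Fst β (fun i => xiMap β (t i))) / β
          ≤ (Real.log c₂ + -M * β) / β :=
            div_le_div_of_nonneg_right h1 hβ0.le
        _ = Real.log c₂ / β + -M := by field_simp
  -- conclude
  have hz0 : (0:ℝ) < z := hz.1
  have hfin : Tendsto (fun β : ℝ =>
      Real.exp (-Real.log z * (Real.log (Fst β (fun i => xiMap β (t i))) / β)))
      atTop (nhds (Real.exp (-Real.log z * -M))) :=
    (Real.continuous_exp.tendsto _).comp (key.const_mul (-Real.log z))
  have heq : ∀ᶠ β : ℝ in atTop,
      Real.exp (-Real.log z * (Real.log (Fst β (fun i => xiMap β (t i))) / β)) =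
        (Fst β (fun i => xiMap β (t i))) ^ (-Real.log z / β) := by
    filter_upwards [eventually_ge_atTop (1:ℝ)] with β hβ
    have hβ0 : (0:ℝ) < β := by linarith
    rw [Real.rpow_def_of_pos (hFpos β hβ0.le)]
    ring_nf
  have : z ^ M = Real.exp (-Real.log z * -M) := by
    rw [Real.rpow_def_of_pos hz0]; ring_nf
  rw [this]
  exact hfin.congr' heq
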